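/- Let Θ be a measurable space, G : Θ → ℝⁿ measurable, M a probability measure on Θ, ρ_y a probability measure on ℝⁿ, and α > 0. Suppose ρ* is a probability measure on Θ with ρ* ≪ M and dρ*/dM = g ∘ G for some measurable g : ℝⁿ → [0,∞); suppose further that G_# ρ* ≪ ρ_y with Radon–Nikodym derivative q = d(G_#ρ*)/dρ_y, and that there is a constant c > 0 such that q(y)·g(y)^α = c for (G_# M)-almost every y. Then ρ* minimizes the regularized objective: for every probability measure ρ on Θ, KL(G_# ρ* ‖ ρ_y) + α·KL(ρ* ‖ M) ≤ KL(G_# ρ ‖ ρ_y) + α·KL(ρ ‖ M). -/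

import Mathlib

open MeasureTheory Real
open scoped ENNReal Classical

section Aux

variable {X Y : Type*} [MeasurableSpace X] [MeasurableSpace Y] {μ ν κ : Measure X}

lemma aux_lintegral_inv_le [SigmaFinite μ] [SigmaFinite ν] (hμν : μ ≪ ν) :
    ∫⁻ x, (μ.rnDeriv ν x)⁻¹ ∂μ ≤ ν Set.univ := by
  have : ∫⁻ x, (μ.rnDeriv ν x)⁻¹ ∂μ = ∫⁻ x, μ.rnDeriv ν x * (μ.rnDeriv ν x)⁻¹ ∂ν := by
    nth_rw 1 [← Measure.withDensity_rnDeriv_eq μ ν hμν]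
    rw [@lintegral_withDensity_eq_lintegral_mul _ _ _ _ (Measure.measurable_rnDeriv μ ν)
      (fun x => (μ.rnDeriv ν x)⁻¹) (Measure.measurable_rnDeriv μ ν).inv]
    rfl
  rw [this]
  calc ∫⁻ x, μ.rnDeriv ν x * (μ.rnDeriv ν x)⁻¹ ∂ν ≤ ∫⁻ _, 1 ∂ν :=
        lintegral_mono fun x => ENNReal.mul_inv_le_one _
    _ = ν Set.univ := lintegral_one

lemma aux_integrable_inv [IsFiniteMeasure μ] [IsFiniteMeasure ν] (hμν : μ ≪ ν) :
    Integrable (fun x => ((μ.rnDeriv ν x)⁻¹).toReal) μ := by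
  refine integrable_toReal_of_lintegral_ne_top
    (Measure.measurable_rnDeriv μ ν).inv.aemeasurable ?_
  exact ((aux_lintegral_inv_le hμν).trans_lt (measure_lt_top _ _)).ne

lemma aux_integral_inv_le_one [IsFiniteMeasure μ] [IsProbabilityMeasure ν] (hμν : μ ≪ ν) :
    ∫ x, ((μ.rnDeriv ν x)⁻¹).toReal ∂μ ≤ 1 := by
  rw [integral_toReal (f := fun x => (μ.rnDeriv ν x)⁻¹) (Measure.measurable_rnDeriv μ ν).inv.aemeasurable ?_]
  · have h := aux_lintegral_inv_le hμν
    rw [measure_univ] at h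
    simpa using ENNReal.toReal_mono ENNReal.one_ne_top h
  · filter_upwards [Measure.rnDeriv_pos hμν] with x hx
    simp [ENNReal.inv_lt_top, hx]

lemma aux_negpart_le (hμν : μ ≪ ν) [SigmaFinite μ] [SigmaFinite ν] :
    ∀ᵐ x ∂μ, max (- llr μ ν x) 0 ≤ ((μ.rnDeriv ν x)⁻¹).toReal := by
  filter_upwards [Measure.rnDeriv_pos hμν, hμν.ae_le (Measure.rnDeriv_lt_top μ ν)]
    with x hpos hlt
  have ht : 0 < (μ.rnDeriv ν x).toReal := ENNReal.toReal_pos hpos.ne' hlt.ne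
  rw [ENNReal.toReal_inv]
  refine max_le ?_ (by positivity)
  rw [llr, ← Real.log_inv]
  have := Real.log_le_sub_one_of_pos (x := (μ.rnDeriv ν x).toReal⁻¹) (by positivity)
  linarith

lemma aux_integrable_negpart [IsFiniteMeasure μ] [IsFiniteMeasure ν] (hμν : μ ≪ ν) :
    Integrable (fun x => max (- llr μ ν x) 0) μ := by
  refine (aux_integrable_inv hμν).mono ?_ ?_
  · exact ((measurable_llr μ ν).neg.max measurable_const).aestronglyMeasurable
  · filter_upwards [aux_negpart_le hμν] with x hx
    rw [Real.norm_of_nonneg (le_max_right _ _), Real.norm_of_nonneg ENNReal.toReal_nonneg]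
    exact hx

lemma aux_gibbs [IsProbabilityMeasure μ] [IsProbabilityMeasure ν] (hμν : μ ≪ ν)
    (h : Integrable (llr μ ν) μ) : 0 ≤ ∫ x, llr μ ν x ∂μ := by
  have hlow : ∀ᵐ x ∂μ, 1 - ((μ.rnDeriv ν x)⁻¹).toReal ≤ llr μ ν x := by
    filter_upwards [Measure.rnDeriv_pos hμν, hμν.ae_le (Measure.rnDeriv_lt_top μ ν)]
      with x hpos hlt
    have ht : 0 < (μ.rnDeriv ν x).toReal := ENNReal.toReal_pos hpos.ne' hlt.ne
    rw [ENNReal.toReal_inv, llr]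
    have h1 := Real.log_le_sub_one_of_pos (x := (μ.rnDeriv ν x).toReal⁻¹) (by positivity)
    rw [Real.log_inv] at h1
    linarith
  have h1 : Integrable (fun x => 1 - ((μ.rnDeriv ν x)⁻¹).toReal) μ :=
    (integrable_const 1).sub (aux_integrable_inv hμν)
  have := integral_mono_ae h1 h hlow
  rw [integral_sub (integrable_const 1) (aux_integrable_inv hμν), integral_const] at this
  simp only [measure_univ, ENNReal.toReal_one, smul_eq_mul, one_mul, probReal_univ] at this
  linarith [aux_integral_inv_le_one hμν]

lemma aux_llr_add [SigmaFinite μ] [SigmaFinite ν] [SigmaFinite κ]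
    (hμν : μ ≪ ν) (hνκ : ν ≪ κ) :
    llr μ κ =ᵐ[μ] fun x => llr μ ν x + llr ν κ x := by
  have hμκ : μ ≪ κ := hμν.trans hνκ
  filter_upwards [hμκ.ae_le (Measure.rnDeriv_mul_rnDeriv hμν),
    Measure.rnDeriv_pos hμν, hμν.ae_le (Measure.rnDeriv_lt_top μ ν),
    hμν.ae_le (Measure.rnDeriv_pos hνκ), hμκ.ae_le (Measure.rnDeriv_lt_top ν κ)]
    with x hx h1 h2 h3 h4
  rw [llr, llr, llr, ← hx, Pi.mul_apply, ENNReal.toReal_mul, Real.log_mul]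
  · exact (ENNReal.toReal_pos h1.ne' h2.ne).ne'
  · exact (ENNReal.toReal_pos h3.ne' h4.ne).ne'

lemma aux_map_withDensity (M : Measure X) (G : X → Y) (hG : Measurable G)
    (g : Y → ℝ≥0∞) (hg : Measurable g) :
    (M.withDensity (fun x => g (G x))).map G = (M.map G).withDensity g := by
  ext s hs
  rw [Measure.map_apply hG hs, withDensity_apply _ (hG hs), withDensity_apply _ hs]
  exact (setLIntegral_map hs hg hG).symm

lemma aux_pt {q g : ℝ≥0∞} {α c : ℝ} (hα : 0 < α) (hc : 0 < c)
    (h : q * g ^ α = ENNReal.ofReal c) :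
    g ≠ 0 ∧ g ≠ ∞ ∧ q ≠ 0 ∧ q ≠ ∞ ∧
      Real.log q.toReal + α * Real.log g.toReal = Real.log c := by
  have hcne : ENNReal.ofReal c ≠ 0 := (ENNReal.ofReal_pos.mpr hc).ne'
  have hcnt : ENNReal.ofReal c ≠ ∞ := ENNReal.ofReal_ne_top
  have hg0 : g ≠ 0 := by
    rintro rfl; rw [ENNReal.zero_rpow_of_pos hα, mul_zero] at h; exact hcne h.symm
  have hq0 : q ≠ 0 := by rintro rfl; rw [zero_mul] at h; exact hcne h.symm
  have hgt : g ≠ ∞ := by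
    rintro rfl
    rw [ENNReal.top_rpow_of_pos hα, ENNReal.mul_top hq0] at h
    exact hcnt h.symm
  have hqt : q ≠ ∞ := by
    rintro rfl
    rw [ENNReal.top_mul (by simp [ENNReal.rpow_eq_zero_iff, hg0, hα, hα.le])] at h
    exact hcnt h.symm
  refine ⟨hg0, hgt, hq0, hqt, ?_⟩
  have htr : q.toReal * g.toReal ^ α = c := by
    rw [ENNReal.toReal_rpow, ← ENNReal.toReal_mul, h, ENNReal.toReal_ofReal hc.le]
  have hgpos : 0 < g.toReal := ENNReal.toReal_pos hg0 hgt
  have hqpos : 0 < q.toReal := ENNReal.toReal_pos hq0 hqt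
  rw [← htr, Real.log_mul hqpos.ne' (Real.rpow_pos_of_pos hgpos α).ne', Real.log_rpow hgpos]

lemma aux_mul_ne_bot {α : ℝ} (hα : 0 < α) {x : EReal} (h : x ≠ ⊥) : (α:EReal) * x ≠ ⊥ := by
  induction x using EReal.rec with
  | bot => exact absurd rfl h
  | coe r => rw [← EReal.coe_mul]; exact EReal.coe_ne_bot _
  | top => rw [EReal.coe_mul_top_of_pos hα]; exact (by simp : (⊤:EReal) ≠ ⊥)

end Aux

/-- The Kullback–Leibler divergence `KL(P‖Q)`: equal to `∫ log (dP/dQ) dP` when `P ≪ Q`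
(and the integrand is `P`-integrable), and `+∞` otherwise. -/
noncomputable def klDiv' {X : Type*} [MeasurableSpace X] (P Q : Measure X) : EReal :=
  if P ≪ Q ∧ Integrable (fun x => Real.log ((P.rnDeriv Q x).toReal)) P
  then ((∫ x, Real.log ((P.rnDeriv Q x).toReal) ∂P : ℝ) : EReal)
  else ⊤

lemma klDiv'_eq {X : Type*} [MeasurableSpace X] {P Q : Measure X}
    (h1 : P ≪ Q) (h2 : Integrable (llr P Q) P) :
    klDiv' P Q = ((∫ x, llr P Q x ∂P : ℝ) : EReal) := by
  unfold klDiv'; rw [if_pos ⟨h1, h2⟩]; rfl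

lemma klDiv'_eq_top {X : Type*} [MeasurableSpace X] {P Q : Measure X}
    (h : ¬ (P ≪ Q ∧ Integrable (llr P Q) P)) : klDiv' P Q = ⊤ := by
  unfold klDiv'
  rw [if_neg (by exact h)]

lemma klDiv'_ne_bot {X : Type*} [MeasurableSpace X] (P Q : Measure X) : klDiv' P Q ≠ ⊥ := by
  unfold klDiv'
  split
  · exact EReal.coe_ne_bot _
  · exact (by simp : (⊤:EReal) ≠ ⊥)

/-- Let `G : Θ → ℝⁿ` be measurable, `M` and `ρy` probability measures,
`α > 0`. Suppose `ρ*` is a probability measure with `dρ*/dM = g ∘ G`, that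
`G_#ρ* ≪ ρy` with `q = d(G_#ρ*)/dρy`, and that `q(y)·g(y)^α = c > 0` for
`(G_#M)`-a.e. `y`. Then `ρ*` minimizes the regularized objective
`KL(G_#ρ‖ρy) + α·KL(ρ‖M)` over probability measures `ρ`. -/
theorem stmt_6 {Θ : Type*} [MeasurableSpace Θ] {n : ℕ}
    (G : Θ → EuclideanSpace ℝ (Fin n)) (hG : Measurable G)
    (M : Measure Θ) [IsProbabilityMeasure M]
    (ρy : Measure (EuclideanSpace ℝ (Fin n))) [IsProbabilityMeasure ρy]
    (α : ℝ) (hα : 0 < α)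
    (g : EuclideanSpace ℝ (Fin n) → ℝ≥0∞) (hg : Measurable g)
    (ρstar : Measure Θ) [IsProbabilityMeasure ρstar]
    (hρstar : ρstar = M.withDensity (fun x => g (G x)))
    (hacs : ρstar.map G ≪ ρy)
    (c : ℝ) (hc : 0 < c)
    (hconst : ∀ᵐ y ∂(M.map G),
      (ρstar.map G).rnDeriv ρy y * g y ^ α = ENNReal.ofReal c) :
    ∀ ρ : Measure Θ, IsProbabilityMeasure ρ →
      klDiv' (ρstar.map G) ρy + (α : EReal) * klDiv' ρstar M ≤
        klDiv' (ρ.map G) ρy + (α : EReal) * klDiv' ρ M := by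
  intro ρ hρ
  haveI hPν : IsProbabilityMeasure (M.map G) := Measure.isProbabilityMeasure_map hG.aemeasurable
  haveI hPμs : IsProbabilityMeasure (ρstar.map G) := Measure.isProbabilityMeasure_map hG.aemeasurable
  haveI hPρG : IsProbabilityMeasure (ρ.map G) := Measure.isProbabilityMeasure_map hG.aemeasurable
  have hmap : ρstar.map G = (M.map G).withDensity g := by
    rw [hρstar]; exact aux_map_withDensity M G hG g hg
  have haeν : ∀ᵐ y ∂(M.map G), g y ≠ 0 ∧ g y ≠ ∞ ∧ (ρstar.map G).rnDeriv ρy y ≠ 0 ∧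
      (ρstar.map G).rnDeriv ρy y ≠ ∞ ∧
      Real.log ((ρstar.map G).rnDeriv ρy y).toReal + α * Real.log (g y).toReal = Real.log c :=
    hconst.mono fun y hy => aux_pt hα hc hy
  have hg0ν : ∀ᵐ y ∂(M.map G), g y ≠ 0 := haeν.mono fun y h => h.1
  -- absolute continuities
  have hρsM : ρstar ≪ M := by rw [hρstar]; exact withDensity_absolutelyContinuous M _
  have hμsν : ρstar.map G ≪ M.map G := by
    rw [hmap]; exact withDensity_absolutelyContinuous _ _
  have hνμs : M.map G ≪ ρstar.map G := by
    rw [hmap]; exact withDensity_absolutelyContinuous' hg.aemeasurable hg0ν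
  have hgM0 : ∀ᵐ x ∂M, g (G x) ≠ 0 := ae_of_ae_map hG.aemeasurable hg0ν
  have hMρs : M ≪ ρstar := by
    rw [hρstar]; exact withDensity_absolutelyContinuous' (hg.comp hG).aemeasurable hgM0
  have hrn : (ρstar.map G).rnDeriv (M.map G) =ᵐ[M.map G] g := by
    rw [hmap]; exact Measure.rnDeriv_withDensity _ hg
  -- key a.e. identity on the image space
  have hkey : ∀ᵐ y ∂(M.map G),
      llr (ρstar.map G) ρy y = Real.log c - α * llr (ρstar.map G) (M.map G) y := by
    filter_upwards [haeν, hrn] with y hy hyrn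
    rw [llr, llr, hyrn]
    linarith [hy.2.2.2.2]
  have hkeyμs : ∀ᵐ y ∂(ρstar.map G),
      llr (ρstar.map G) ρy y = Real.log c - α * llr (ρstar.map G) (M.map G) y :=
    hμsν.ae_le hkey
  -- integrability of the llr's of ρstar
  have hneg1 : Integrable (fun y => max (- llr (ρstar.map G) (M.map G) y) 0) (ρstar.map G) :=
    aux_integrable_negpart hμsν
  have hneg2 : Integrable (fun y => max (- llr (ρstar.map G) ρy y) 0) (ρstar.map G) :=
    aux_integrable_negpart hacs
  have hIntf : Integrable (llr (ρstar.map G) ρy) (ρstar.map G) := by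
    refine Integrable.mono' ((integrable_const |Real.log c|).add
      ((hneg1.const_mul α).add hneg2)) (stronglyMeasurable_llr _ _).aestronglyMeasurable ?_
    filter_upwards [hkeyμs] with y hy
    simp only [Pi.add_apply]
    set f := llr (ρstar.map G) ρy y
    set m := llr (ρstar.map G) (M.map G) y
    have h1 : α * (-m) ≤ α * max (-m) 0 := mul_le_mul_of_nonneg_left (le_max_left _ _) hα.le
    rw [mul_neg] at h1
    have h2 : (0:ℝ) ≤ max (-m) 0 := le_max_right _ _
    have h3 : -f ≤ max (-f) 0 := le_max_left _ _
    have h4 : (0:ℝ) ≤ max (-f) 0 := le_max_right _ _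
    have h5 : Real.log c ≤ |Real.log c| := le_abs_self _
    have h6 : -|Real.log c| ≤ Real.log c := neg_abs_le _
    rw [Real.norm_eq_abs, abs_le]
    constructor
    · have : 0 ≤ α * max (-m) 0 := mul_nonneg hα.le h2
      linarith
    · linarith
  have hIntm : Integrable (llr (ρstar.map G) (M.map G)) (ρstar.map G) := by
    have h0 : Integrable (fun y => α⁻¹ * (Real.log c - llr (ρstar.map G) ρy y)) (ρstar.map G) :=
      ((integrable_const (Real.log c)).sub hIntf).const_mul α⁻¹
    refine h0.congr ?_
    filter_upwards [hkeyμs] with y hy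
    rw [hy]
    field_simp
    ring
  have hL1 : ∫ y, llr (ρstar.map G) ρy y ∂(ρstar.map G)
      = Real.log c - α * ∫ y, llr (ρstar.map G) (M.map G) y ∂(ρstar.map G) := by
    rw [integral_congr_ae hkeyμs, integral_sub (integrable_const _) (hIntm.const_mul α),
      integral_const, integral_const_mul]
    simp [measure_univ]
  -- llr of ρstar against M is the pullback of llr on the image
  have hrnρs : ρstar.rnDeriv M =ᵐ[M] fun x => g (G x) := by
    rw [hρstar]; exact Measure.rnDeriv_withDensity M (hg.comp hG)
  have hcompν : ∀ᵐ y ∂(M.map G), llr (ρstar.map G) (M.map G) y = Real.log (g y).toReal := by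
    filter_upwards [hrn] with y hy
    rw [llr, hy]
  have hcomp : ∀ᵐ x ∂M, llr (ρstar.map G) (M.map G) (G x) = Real.log (g (G x)).toReal :=
    ae_of_ae_map hG.aemeasurable hcompν
  have hllrρs : llr ρstar M =ᵐ[M] fun x => llr (ρstar.map G) (M.map G) (G x) := by
    filter_upwards [hrnρs, hcomp] with x h1 h2
    rw [llr, h1, h2]
  have hIntρsM : Integrable (llr ρstar M) ρstar := by
    have h1 : Integrable (fun x => llr (ρstar.map G) (M.map G) (G x)) ρstar :=
      (integrable_map_measure (stronglyMeasurable_llr _ _).aestronglyMeasurable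
        hG.aemeasurable).mp hIntm
    exact h1.congr (Filter.EventuallyEq.symm (hρsM.ae_le hllrρs))
  have hL2 : ∫ x, llr ρstar M x ∂ρstar
      = ∫ y, llr (ρstar.map G) (M.map G) y ∂(ρstar.map G) := by
    rw [integral_congr_ae (hρsM.ae_le hllrρs)]
    exact (integral_map hG.aemeasurable (stronglyMeasurable_llr _ _).aestronglyMeasurable).symm
  have hLHS : klDiv' (ρstar.map G) ρy + (α : EReal) * klDiv' ρstar M
      = ((Real.log c : ℝ) : EReal) := by
    rw [klDiv'_eq hacs hIntf, klDiv'_eq hρsM hIntρsM]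
    have hval : (∫ y, llr (ρstar.map G) ρy y ∂(ρstar.map G))
        + α * ∫ x, llr ρstar M x ∂ρstar = Real.log c := by
      rw [hL1, hL2]; ring
    exact_mod_cast hval
  -- case analysis on ρ
  by_cases h2 : ρ ≪ M ∧ Integrable (llr ρ M) ρ
  swap
  · rw [klDiv'_eq_top h2, EReal.coe_mul_top_of_pos hα,
      EReal.add_top_of_ne_bot (klDiv'_ne_bot _ _)]
    exact le_top
  by_cases h1 : ρ.map G ≪ ρy ∧ Integrable (llr (ρ.map G) ρy) (ρ.map G)
  swap
  · rw [klDiv'_eq_top h1, EReal.top_add_of_ne_bot (aux_mul_ne_bot hα (klDiv'_ne_bot _ _))]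
    exact le_top
  obtain ⟨hρM, hIB⟩ := h2
  obtain ⟨hρGy, hIA⟩ := h1
  have hρρs : ρ ≪ ρstar := hρM.trans hMρs
  have hρGν : ρ.map G ≪ M.map G := hρM.map hG
  have hρGμs : ρ.map G ≪ ρstar.map G := hρGν.trans hνμs
  -- decompositions
  have hdecA : ∀ᵐ x ∂ρ, llr (ρ.map G) ρy (G x)
      = llr (ρ.map G) (ρstar.map G) (G x)
        + (Real.log c - α * llr (ρstar.map G) (M.map G) (G x)) := by
    have hdecAν : ∀ᵐ y ∂(ρ.map G), llr (ρ.map G) ρy y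
        = llr (ρ.map G) (ρstar.map G) y
          + (Real.log c - α * llr (ρstar.map G) (M.map G) y) := by
      filter_upwards [aux_llr_add hρGμs hacs, hρGν.ae_le hkey] with y hy1 hy2
      rw [hy1, hy2]
    exact ae_of_ae_map (p := fun y => llr (ρ.map G) ρy y
      = llr (ρ.map G) (ρstar.map G) y
        + (Real.log c - α * llr (ρstar.map G) (M.map G) y)) hG.aemeasurable hdecAν
  have hdecB : ∀ᵐ x ∂ρ, llr ρ M x = llr ρ ρstar x + llr (ρstar.map G) (M.map G) (G x) := by
    filter_upwards [aux_llr_add hρρs hρsM, hρM.ae_le hllrρs] with x hx1 hx2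
    rw [hx1, hx2]
  -- integrability juggling
  have hIA' : Integrable (fun x => llr (ρ.map G) ρy (G x)) ρ :=
    (integrable_map_measure (stronglyMeasurable_llr _ _).aestronglyMeasurable
      hG.aemeasurable).mp hIA
  have hnegX : Integrable (fun x => max (- llr (ρ.map G) (ρstar.map G) (G x)) 0) ρ :=
    (integrable_map_measure ((measurable_llr _ _).neg.max
      measurable_const).stronglyMeasurable.aestronglyMeasurable hG.aemeasurable).mp
      (aux_integrable_negpart hρGμs)
  have hnegW : Integrable (fun x => max (- llr ρ ρstar x) 0) ρ := aux_integrable_negpart hρρs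
  have hU : Integrable (fun x => llr (ρ.map G) (ρstar.map G) (G x)
      - α * llr (ρstar.map G) (M.map G) (G x)) ρ := by
    refine (hIA'.sub (integrable_const (Real.log c))).congr ?_
    filter_upwards [hdecA] with x hx
    simp only [Pi.sub_apply]
    rw [hx]; ring
  have hV : Integrable (fun x => llr ρ ρstar x + llr (ρstar.map G) (M.map G) (G x)) ρ :=
    hIB.congr hdecB
  have hS : Integrable (fun x => llr (ρ.map G) (ρstar.map G) (G x) + α * llr ρ ρstar x) ρ := by
    refine (hU.add (hV.const_mul α)).congr (Filter.Eventually.of_forall fun x => by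
      simp only [Pi.add_apply, Pi.sub_apply]; ring)
  have hX : Integrable (fun x => llr (ρ.map G) (ρstar.map G) (G x)) ρ := by
    refine Integrable.mono' (hS.abs.add ((hnegW.const_mul α).add hnegX))
      ((measurable_llr _ _).comp hG).stronglyMeasurable.aestronglyMeasurable
      (Filter.Eventually.of_forall fun x => ?_)
    simp only [Pi.add_apply]
    set a := llr (ρ.map G) (ρstar.map G) (G x)
    set w := llr ρ ρstar x
    have h1 : α * (-w) ≤ α * max (-w) 0 := mul_le_mul_of_nonneg_left (le_max_left _ _) hα.le
    rw [mul_neg] at h1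
    have h2 : (0:ℝ) ≤ α * max (-w) 0 := mul_nonneg hα.le (le_max_right _ _)
    have h3 : -a ≤ max (-a) 0 := le_max_left _ _
    have h4 : (0:ℝ) ≤ max (-a) 0 := le_max_right _ _
    have h5 : a + α * w ≤ |a + α * w| := le_abs_self _
    have h6 : (0:ℝ) ≤ |a + α * w| := abs_nonneg _
    rw [Real.norm_eq_abs, abs_le]
    constructor <;> linarith
  have hW : Integrable (llr ρ ρstar) ρ := by
    refine ((hS.sub hX).const_mul α⁻¹).congr (Filter.Eventually.of_forall fun x => ?_)
    simp only [Pi.sub_apply]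
    field_simp
    ring
  have hY : Integrable (fun x => llr (ρstar.map G) (M.map G) (G x)) ρ :=
    (hV.sub hW).congr (Filter.Eventually.of_forall fun x => by
      simp only [Pi.sub_apply]; ring)
  -- Gibbs inequalities
  have hXν : Integrable (llr (ρ.map G) (ρstar.map G)) (ρ.map G) :=
    (integrable_map_measure (stronglyMeasurable_llr _ _).aestronglyMeasurable
      hG.aemeasurable).mpr hX
  have hGibbs1 : 0 ≤ ∫ x, llr (ρ.map G) (ρstar.map G) (G x) ∂ρ := by
    rw [← integral_map hG.aemeasurable (stronglyMeasurable_llr _ _).aestronglyMeasurable]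
    exact aux_gibbs hρGμs hXν
  have hGibbs2 : 0 ≤ ∫ x, llr ρ ρstar x ∂ρ := aux_gibbs hρρs hW
  -- values
  have hAval : ∫ y, llr (ρ.map G) ρy y ∂(ρ.map G)
      = (∫ x, llr (ρ.map G) (ρstar.map G) (G x) ∂ρ) + Real.log c
        - α * ∫ x, llr (ρstar.map G) (M.map G) (G x) ∂ρ := by
    have hg2 : Integrable (fun x => Real.log c
        - α * llr (ρstar.map G) (M.map G) (G x)) ρ := (integrable_const _).sub (hY.const_mul α)
    rw [integral_map hG.aemeasurable (stronglyMeasurable_llr _ _).aestronglyMeasurable,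
      integral_congr_ae hdecA, integral_add hX hg2,
      integral_sub (integrable_const _) (hY.const_mul α), integral_const, integral_const_mul]
    simp only [measure_univ, ENNReal.toReal_one, smul_eq_mul, one_mul, probReal_univ]
    ring
  have hBval : ∫ x, llr ρ M x ∂ρ
      = (∫ x, llr ρ ρstar x ∂ρ) + ∫ x, llr (ρstar.map G) (M.map G) (G x) ∂ρ := by
    rw [integral_congr_ae hdecB, integral_add hW hY]
  -- conclusion
  rw [hLHS, klDiv'_eq hρGy hIA, klDiv'_eq hρM hIB]
  have hfinal : Real.log c ≤ (∫ y, llr (ρ.map G) ρy y ∂(ρ.map G)) + α * ∫ x, llr ρ M x ∂ρ := by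
    rw [hAval, hBval]
    nlinarith [mul_nonneg hα.le hGibbs2]
  exact_mod_cast hfinal
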